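/- For a nonempty code C ⊆ 2^[n], a squarefree monomial x^σ y^τ (σ, τ ⊆ [n]) lies in the Stanley–Reisner ideal of the polar complex Γ(C) if and only if the pseudo-monomial x^σ(1−x)^τ lies in the vanishing ideal I_C, i.e. if and only if every codeword α ∈ C with σ ⊆ α satisfies α ∩ τ ≠ ∅. -/

import Mathlib

open MvPolynomial

def polarFace {n : ℕ} (σ : Finset (Fin n)) : Finset (Fin n ⊕ Fin n) :=
  σ.image Sum.inl ∪ σᶜ.image Sum.inr

def polar {n : ℕ} (C : Set (Finset (Fin n))) : Set (Finset (Fin n ⊕ Fin n)) :=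
  {F | ∃ σ ∈ C, F ⊆ polarFace σ}

/-- The Stanley–Reisner ideal of the polar complex `Γ(C)` in
`𝔽₂[x₁,…,xₙ,y₁,…,yₙ]` (variables indexed by `Fin n ⊕ Fin n`): generated by the
squarefree monomials of nonfaces. -/
noncomputable def SRideal {n : ℕ} (C : Set (Finset (Fin n))) :
    Ideal (MvPolynomial (Fin n ⊕ Fin n) (ZMod 2)) :=
  Ideal.span {m | ∃ F : Finset (Fin n ⊕ Fin n), F ∉ polar C ∧ m = ∏ v ∈ F, X v}

/-- The vanishing ideal `I_C`: polynomials vanishing on the indicator vectors of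
all codewords. -/
def Ivan {n : ℕ} (C : Set (Finset (Fin n))) : Set (MvPolynomial (Fin n) (ZMod 2)) :=
  {p | ∀ α ∈ C, eval (fun i => if i ∈ α then (1 : ZMod 2) else 0) p = 0}

lemma prod_ind {n : ℕ} (σ α : Finset (Fin n)) :
    (∏ i ∈ σ, (if i ∈ α then (1 : ZMod 2) else 0)) = if σ ⊆ α then 1 else 0 := by
  by_cases h : σ ⊆ α
  · rw [if_pos h]
    exact Finset.prod_eq_one (fun i hi => if_pos (h hi))
  · rw [if_neg h]
    obtain ⟨i, hi, hia⟩ := Finset.not_subset.mp h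
    exact Finset.prod_eq_zero hi (if_neg hia)

lemma prod_ind' {n : ℕ} (τ α : Finset (Fin n)) :
    (∏ j ∈ τ, ((1 : ZMod 2) - if j ∈ α then 1 else 0)) =
      if ∀ j ∈ τ, j ∉ α then 1 else 0 := by
  by_cases h : ∀ j ∈ τ, j ∉ α
  · rw [if_pos h]
    exact Finset.prod_eq_one (fun j hj => by rw [if_neg (h j hj), sub_zero])
  · rw [if_neg h]
    push_neg at h
    obtain ⟨j, hj, hja⟩ := h
    exact Finset.prod_eq_zero hj (by rw [if_pos hja, sub_self])

lemma eval_pseudo {n : ℕ} (σ τ α : Finset (Fin n)) :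
    eval (fun i => if i ∈ α then (1 : ZMod 2) else 0)
      ((∏ i ∈ σ, X i) * ∏ j ∈ τ, (1 - X j)) =
      (if σ ⊆ α then 1 else 0) * (if ∀ j ∈ τ, j ∉ α then 1 else 0) := by
  rw [map_mul, map_prod, map_prod]
  simp only [map_sub, eval_X, map_one]
  rw [prod_ind, prod_ind']

lemma subset_polarFace_iff {n : ℕ} (σ τ α : Finset (Fin n)) :
    σ.image Sum.inl ∪ τ.image Sum.inr ⊆ polarFace α ↔
      σ ⊆ α ∧ ∀ j ∈ τ, j ∉ α := by
  unfold polarFace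
  rw [Finset.union_subset_iff]
  constructor
  · rintro ⟨h1, h2⟩
    constructor
    · intro i hi
      have := h1 (Finset.mem_image_of_mem Sum.inl hi)
      rcases Finset.mem_union.mp this with h | h
      · obtain ⟨a, ha, hae⟩ := Finset.mem_image.mp h
        cases Sum.inl.inj hae; exact ha
      · obtain ⟨a, _, hae⟩ := Finset.mem_image.mp h
        exact absurd hae (by simp)
    · intro j hj
      have := h2 (Finset.mem_image_of_mem Sum.inr hj)
      rcases Finset.mem_union.mp this with h | h
      · obtain ⟨a, _, hae⟩ := Finset.mem_image.mp h
        exact absurd hae (by simp)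
      · obtain ⟨a, ha, hae⟩ := Finset.mem_image.mp h
        cases Sum.inr.inj hae
        simpa using ha
  · rintro ⟨h1, h2⟩
    constructor
    · intro v hv
      obtain ⟨i, hi, rfl⟩ := Finset.mem_image.mp hv
      exact Finset.mem_union_left _ (Finset.mem_image_of_mem _ (h1 hi))
    · intro v hv
      obtain ⟨j, hj, rfl⟩ := Finset.mem_image.mp hv
      exact Finset.mem_union_right _
        (Finset.mem_image_of_mem _ (Finset.mem_compl.mpr (h2 j hj)))

lemma monomial_eq' {n : ℕ} (σ τ : Finset (Fin n)) :
    (∏ v ∈ σ.image Sum.inl ∪ τ.image Sum.inr, (X v : MvPolynomial (Fin n ⊕ Fin n) (ZMod 2))) =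
      (∏ i ∈ σ, X (Sum.inl i)) * ∏ j ∈ τ, X (Sum.inr j) := by
  rw [Finset.prod_union, Finset.prod_image (fun _ _ _ _ h => Sum.inl.inj h),
    Finset.prod_image (fun _ _ _ _ h => Sum.inr.inj h)]
  rw [Finset.disjoint_left]
  rintro v hv hv'
  obtain ⟨i, _, rfl⟩ := Finset.mem_image.mp hv
  obtain ⟨j, _, h⟩ := Finset.mem_image.mp hv'
  cases h

/-- For a nonempty code `C`, the squarefree monomial `x^σ y^τ` lies in the
Stanley–Reisner ideal of `Γ(C)` iff the pseudo-monomial `x^σ (1-x)^τ` lies in the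
vanishing ideal `I_C`, i.e. iff every codeword `α ∈ C` with `σ ⊆ α` meets `τ`. -/
theorem SR_iff_pseudo_monomial {n : ℕ} (C : Set (Finset (Fin n))) (hC : C.Nonempty)
    (σ τ : Finset (Fin n)) :
    (((∏ i ∈ σ, X (Sum.inl i)) * ∏ j ∈ τ, X (Sum.inr j)) ∈ SRideal C ↔
      ((∏ i ∈ σ, X i) * ∏ j ∈ τ, (1 - X j)) ∈ Ivan C) ∧
    (((∏ i ∈ σ, X i) * ∏ j ∈ τ, (1 - X j)) ∈ Ivan C ↔
      ∀ α ∈ C, σ ⊆ α → (α ∩ τ).Nonempty) := by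
  have key : ((∏ i ∈ σ, X i) * ∏ j ∈ τ, (1 - X j)) ∈ Ivan C ↔
      ∀ α ∈ C, σ ⊆ α → (α ∩ τ).Nonempty := by
    constructor
    · intro h α hα hσ
      have := h α hα
      rw [eval_pseudo, if_pos hσ, one_mul] at this
      by_contra hne
      rw [Finset.not_nonempty_iff_eq_empty] at hne
      have hdisj : ∀ j ∈ τ, j ∉ α := by
        intro j hj hja
        exact absurd hne (Finset.ne_empty_of_mem (Finset.mem_inter.mpr ⟨hja, hj⟩))
      rw [if_pos hdisj] at this
      exact one_ne_zero this
    · intro h α hα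
      rw [eval_pseudo]
      by_cases hσ : σ ⊆ α
      · obtain ⟨j, hj⟩ := h α hα hσ
        rw [Finset.mem_inter] at hj
        have h2 : (if ∀ j ∈ τ, j ∉ α then (1:ZMod 2) else 0) = 0 :=
          if_neg (fun hd => hd j hj.2 hj.1)
        rw [h2, mul_zero]
      · rw [if_neg hσ, zero_mul]
  refine ⟨?_, key⟩
  rw [key]
  constructor
  · -- SR → condition
    intro hm α hα hσ
    by_contra hne
    rw [Finset.not_nonempty_iff_eq_empty] at hne
    have hdisj : ∀ j ∈ τ, j ∉ α := by
      intro j hj hja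
      exact absurd hne (Finset.ne_empty_of_mem (Finset.mem_inter.mpr ⟨hja, hj⟩))
    set E : Fin n ⊕ Fin n → ZMod 2 := fun v => if v ∈ polarFace α then 1 else 0 with hE
    have hker : SRideal C ≤ RingHom.ker (eval E) := by
      rw [SRideal, Ideal.span_le]
      rintro m ⟨G, hG, rfl⟩
      have : ¬ G ⊆ polarFace α := fun hsub => hG ⟨α, hα, hsub⟩
      obtain ⟨v, hv, hv'⟩ := Finset.not_subset.mp this
      simp only [SetLike.mem_coe, RingHom.mem_ker, map_prod, eval_X]
      exact Finset.prod_eq_zero hv (if_neg hv')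
    have h0 := hker hm
    rw [RingHom.mem_ker, map_mul, map_prod, map_prod] at h0
    simp only [eval_X] at h0
    have h1 : (∏ i ∈ σ, E (Sum.inl i)) * ∏ j ∈ τ, E (Sum.inr j) = 1 := by
      rw [Finset.prod_eq_one, Finset.prod_eq_one, one_mul]
      · intro j hj
        have : (Sum.inr j : Fin n ⊕ Fin n) ∈ polarFace α :=
          Finset.mem_union_right _
            (Finset.mem_image_of_mem _ (Finset.mem_compl.mpr (hdisj j hj)))
        exact if_pos this
      · intro i hi
        have : (Sum.inl i : Fin n ⊕ Fin n) ∈ polarFace α :=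
          Finset.mem_union_left _ (Finset.mem_image_of_mem _ (hσ hi))
        exact if_pos this
    rw [h0] at h1
    exact zero_ne_one h1
  · -- condition → SR
    intro h
    have hF : (σ.image Sum.inl ∪ τ.image Sum.inr) ∉ polar C := by
      rintro ⟨α, hα, hsub⟩
      obtain ⟨h1, h2⟩ := (subset_polarFace_iff σ τ α).mp hsub
      obtain ⟨j, hj⟩ := h α hα h1
      rw [Finset.mem_inter] at hj
      exact h2 j hj.2 hj.1
    rw [← monomial_eq']
    exact Ideal.subset_span ⟨_, hF, rfl⟩
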